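/- Let ρ(p) be an asymptotically polytropic/linear equation of state and let (m(r), p(r)) be a regular solution of the TOV system with finite radius R < ∞ and finite total mass M < ∞. Then GM/(c²R) < 1/2, and the metric coefficient 1 − 2Gm(r)/(c²r) is bounded away from zero throughout the fluid body: inf_{r ∈ (0,R)} (1 − 2Gm(r)/(c²r)) > 0. -/

import Mathlib

open Real Set Filter Topology

/-- The domain `(0, R)` of radii, where `R ∈ (0,∞]`. -/
def tovDomain (R : ENNReal) : Set ℝ := {r : ℝ | 0 < r ∧ ENNReal.ofReal r < R}

/-- `(m, p)` is a solution of the TOV system on `(0, R)` with `p > 0`, `m > 0` and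
`2Gm < c²r`. -/
def IsTOVSolution (G c : ℝ) (ρ m p : ℝ → ℝ) (R : ENNReal) : Prop :=
  ∀ r ∈ tovDomain R,
    0 < p r ∧ 0 < m r ∧ 2 * G * m r < c ^ 2 * r ∧
    HasDerivAt m (4 * Real.pi * r ^ 2 * ρ (p r)) r ∧
    HasDerivAt p (-(G * m r * ρ (p r) / r ^ 2) * (1 + p r / (ρ (p r) * c ^ 2)) *
      (1 + 4 * Real.pi * r ^ 3 * p r / (m r * c ^ 2)) *
      (1 - 2 * G * m r / (c ^ 2 * r))⁻¹) r

/-- `ρ` is a barotropic equation of state: continuous on `[0,∞)`, C² and positive on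
`(0,∞)`, with `dρ/dp ≥ 0`. -/
def IsBarotropic (ρ : ℝ → ℝ) : Prop :=
  ContinuousOn ρ (Ici 0) ∧ ContDiffOn ℝ 2 ρ (Ioi 0) ∧
  (∀ q ≥ 0, 0 ≤ ρ q) ∧ (∀ q > 0, 0 < ρ q) ∧ (∀ q > 0, 0 ≤ deriv ρ q)

/-- The interval `(0, R)` is maximal: the solution admits no extension to a larger
interval. -/
def IsMaximalTOVSolution (G c : ℝ) (ρ m p : ℝ → ℝ) (R : ENNReal) : Prop :=
  IsTOVSolution G c ρ m p R ∧
  ∀ (R' : ENNReal) (m' p' : ℝ → ℝ), R < R' → IsTOVSolution G c ρ m' p' R' →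
    Set.EqOn m' m (tovDomain R) → ¬ Set.EqOn p' p (tovDomain R)

/-- A regular solution of the TOV system with central pressure `pc > 0`: a maximal
solution with `p(r) → pc` and `m(r)/r³ → (4π/3)ρ(pc)` as `r → 0⁺`. -/
def IsRegularTOVSolution (G c : ℝ) (ρ m p : ℝ → ℝ) (R : ENNReal) (pc : ℝ) : Prop :=
  IsMaximalTOVSolution G c ρ m p R ∧ 0 < pc ∧
  Filter.Tendsto p (nhdsWithin 0 (Ioi 0)) (nhds pc) ∧
  Filter.Tendsto (fun r => m r / r ^ 3) (nhdsWithin 0 (Ioi 0))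
    (nhds (4 * Real.pi / 3 * ρ pc))

/-- `ρ` is an asymptotically polytropic (as `p → 0`, with polytropic index `n₀`) and
asymptotically linear (as `p → ∞`, with `p = (γ₁−1)ρc²`) equation of state: there is
a strictly increasing C¹ bijection `ω : (0,∞) → (0,∞)` of `p`, whose logarithmic
derivative `f(p) = p·ω'(p)/ω(p)` has positive limits `f₀` (at `0`) and `f₁` (at `∞`),
such that, with `Ω = ω/(1+ω)`, the functions `Υ = (p/ρ)(dρ/dp)` and `σ = p/(ρc²)`
extend to C¹ functions of `Ω` on `[0,1]` with `Υ(0) = n₀/(n₀+1) < 1`, `Υ(1) = 1`,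
`σ(0) = 0`, `σ(1) = γ₁ − 1`, `1 < γ₁ ≤ 2`, and `f₀ < 1 − n₀/(n₀+1)`. -/
def IsAsymptoticallyPolytropicLinear (c : ℝ) (ρ : ℝ → ℝ) (n₀ γ₁ : ℝ) : Prop :=
  0 ≤ n₀ ∧ 1 < γ₁ ∧ γ₁ ≤ 2 ∧
  ∃ (ω ω' : ℝ → ℝ) (f₀ f₁ : ℝ) (Υe σe : ℝ → ℝ),
    StrictMonoOn ω (Ioi 0) ∧
    Set.BijOn ω (Ioi 0) (Ioi 0) ∧
    (∀ q > 0, HasDerivAt ω (ω' q) q) ∧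
    ContinuousOn ω' (Ioi 0) ∧
    0 < f₀ ∧ 0 < f₁ ∧
    Filter.Tendsto (fun q => q * ω' q / ω q) (nhdsWithin 0 (Ioi 0)) (nhds f₀) ∧
    Filter.Tendsto (fun q => q * ω' q / ω q) Filter.atTop (nhds f₁) ∧
    ContDiffOn ℝ 1 Υe (Icc 0 1) ∧
    ContDiffOn ℝ 1 σe (Icc 0 1) ∧
    (∀ q > 0, Υe (ω q / (1 + ω q)) = q / ρ q * deriv ρ q) ∧
    (∀ q > 0, σe (ω q / (1 + ω q)) = q / (ρ q * c ^ 2)) ∧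
    Υe 0 = n₀ / (n₀ + 1) ∧ n₀ / (n₀ + 1) < 1 ∧ Υe 1 = 1 ∧
    σe 0 = 0 ∧ σe 1 = γ₁ - 1 ∧
    f₀ < 1 - n₀ / (n₀ + 1)

private lemma tov_aux {A B Cc yi w : ℝ} (hA : 0 ≤ A) (hyi : 0 ≤ yi) (hB : 1 ≤ B)
    (hCc : 1 ≤ Cc) (hs : w ≤ A * yi) : -A * B * Cc * yi ≤ -w := by
  have h0 : 0 ≤ A * yi := mul_nonneg hA hyi
  have h2 : 1 ≤ B * Cc := by nlinarith
  have h3 : A * yi * 1 ≤ A * yi * (B * Cc) := mul_le_mul_of_nonneg_left h2 h0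
  nlinarith [h3, hs]

set_option maxHeartbeats 1000000

/-- A regular TOV solution for an asymptotically polytropic/linear
equation of state with finite radius `R` and finite total mass `M` satisfies
`GM/(c²R) < 1/2`, and `1 − 2Gm(r)/(c²r)` is bounded away from zero on `(0,R)`. -/
theorem stmt9
    (G c : ℝ) (hG : 0 < G) (hc : 0 < c)
    (ρ : ℝ → ℝ) (hρ : IsBarotropic ρ)
    (n₀ γ₁ : ℝ) (hapl : IsAsymptoticallyPolytropicLinear c ρ n₀ γ₁)
    (m p : ℝ → ℝ) (R : ENNReal) (pc : ℝ)
    (hsol : IsRegularTOVSolution G c ρ m p R pc)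
    (hRfin : R ≠ ⊤) (M : ℝ)
    (hM : Filter.Tendsto m (nhdsWithin R.toReal (Iio R.toReal)) (nhds M)) :
    G * M / (c ^ 2 * R.toReal) < 1 / 2 ∧
    ∃ ε > (0:ℝ), ∀ r ∈ tovDomain R, ε ≤ 1 - 2 * G * m r / (c ^ 2 * r) := by
  obtain ⟨⟨hTOV, _hmax⟩, hpc, hplim, hmlim⟩ := hsol
  have hc2 : (0:ℝ) < c ^ 2 := by positivity
  have hπ : (0:ℝ) < π := Real.pi_pos
  by_cases hR0 : R.toReal ≤ 0
  · have h0 : R.toReal = 0 := le_antisymm hR0 ENNReal.toReal_nonneg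
    constructor
    · rw [h0, mul_zero, div_zero]; norm_num
    · refine ⟨1, one_pos, fun r hr => absurd hr.2 ?_⟩
      have hRz : R = 0 := by
        rcases (ENNReal.toReal_eq_zero_iff R).mp h0 with h | h
        · exact h
        · exact absurd h hRfin
      rw [hRz]
      simp
  push_neg at hR0
  set R₀ := R.toReal with hR₀def
  have hmem : ∀ r : ℝ, r ∈ tovDomain R ↔ r ∈ Ioo 0 R₀ := by
    intro r
    unfold tovDomain
    simp only [mem_setOf_eq, mem_Ioo]
    exact and_congr_right fun h1 => ENNReal.ofReal_lt_iff_lt_toReal h1.le hRfin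
  have hsolve : ∀ r ∈ Ioo (0:ℝ) R₀, 0 < p r ∧ 0 < m r ∧ 2 * G * m r < c ^ 2 * r ∧
      HasDerivAt m (4 * Real.pi * r ^ 2 * ρ (p r)) r ∧
      HasDerivAt p (-(G * m r * ρ (p r) / r ^ 2) * (1 + p r / (ρ (p r) * c ^ 2)) *
        (1 + 4 * Real.pi * r ^ 3 * p r / (m r * c ^ 2)) *
        (1 - 2 * G * m r / (c ^ 2 * r))⁻¹) r :=
    fun r hr => hTOV r ((hmem r).mpr hr)
  have hp0 : ∀ r ∈ Ioo (0:ℝ) R₀, 0 < p r := fun r hr => (hsolve r hr).1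
  have hm0 : ∀ r ∈ Ioo (0:ℝ) R₀, 0 < m r := fun r hr => (hsolve r hr).2.1
  have hlt : ∀ r ∈ Ioo (0:ℝ) R₀, 2 * G * m r < c ^ 2 * r := fun r hr => (hsolve r hr).2.2.1
  have hdm : ∀ r ∈ Ioo (0:ℝ) R₀, HasDerivAt m (4 * Real.pi * r ^ 2 * ρ (p r)) r :=
    fun r hr => (hsolve r hr).2.2.2.1
  have hdp : ∀ r ∈ Ioo (0:ℝ) R₀,
      HasDerivAt p (-(G * m r * ρ (p r) / r ^ 2) * (1 + p r / (ρ (p r) * c ^ 2)) *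
        (1 + 4 * Real.pi * r ^ 3 * p r / (m r * c ^ 2)) *
        (1 - 2 * G * m r / (c ^ 2 * r))⁻¹) r :=
    fun r hr => (hsolve r hr).2.2.2.2
  have hρp : ∀ r ∈ Ioo (0:ℝ) R₀, 0 < ρ (p r) := fun r hr => hρ.2.2.2.1 _ (hp0 r hr)
  have hy0 : ∀ r ∈ Ioo (0:ℝ) R₀, 0 < 1 - 2 * G * m r / (c ^ 2 * r) := by
    intro r hr
    have h1 : 0 < c ^ 2 * r := mul_pos hc2 hr.1
    have h2 := (div_lt_one h1).mpr (hlt r hr)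
    linarith
  -- derivative of the metric coefficient y(r) = 1 - 2Gm/(c²r)
  have hdy : ∀ r ∈ Ioo (0:ℝ) R₀, HasDerivAt (fun s => 1 - 2 * G * m s / (c ^ 2 * s))
      (2 * G * m r / (c ^ 2 * r ^ 2) - 8 * Real.pi * G * r * ρ (p r) / c ^ 2) r := by
    intro r hr
    have hr0 : r ≠ 0 := ne_of_gt hr.1
    have hc0 : c ≠ 0 := ne_of_gt hc
    have h1 : HasDerivAt (fun s => m s / s)
        ((4 * Real.pi * r ^ 2 * ρ (p r) * r - m r * 1) / r ^ 2) r :=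
      (hdm r hr).div (hasDerivAt_id' (x := r)) hr0
    have h2 : HasDerivAt (fun s => 1 - 2 * G / c ^ 2 * (m s / s))
        (-(2 * G / c ^ 2 * ((4 * Real.pi * r ^ 2 * ρ (p r) * r - m r * 1) / r ^ 2))) r :=
      (h1.const_mul (2 * G / c ^ 2)).const_sub 1
    have heq : (fun s => 1 - 2 * G * m s / (c ^ 2 * s)) =ᶠ[nhds r]
        (fun s => 1 - 2 * G / c ^ 2 * (m s / s)) := by
      filter_upwards [eventually_ne_nhds hr0] with s hs
      field_simp
    have h3 := h2.congr_of_eventuallyEq heq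
    refine h3.congr_deriv ?_
    field_simp
    ring
  have hconv : Convex ℝ (Ioo (0:ℝ) R₀) := convex_Ioo 0 R₀
  have hmcont : ContinuousOn m (Ioo (0:ℝ) R₀) :=
    fun r hr => ((hdm r hr).continuousAt).continuousWithinAt
  have hmmono : MonotoneOn m (Ioo (0:ℝ) R₀) := by
    apply monotoneOn_of_deriv_nonneg hconv hmcont
    · intro r hr
      rw [isOpen_Ioo.interior_eq] at hr
      exact ((hdm r hr).differentiableAt).differentiableWithinAt
    · intro r hr
      rw [isOpen_Ioo.interior_eq] at hr
      rw [(hdm r hr).deriv]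
      have h1 := (hρp r hr).le
      have h2 := hr.1
      positivity
  have hP'neg : ∀ r ∈ Ioo (0:ℝ) R₀,
      (-(G * m r * ρ (p r) / r ^ 2) * (1 + p r / (ρ (p r) * c ^ 2)) *
        (1 + 4 * Real.pi * r ^ 3 * p r / (m r * c ^ 2)) *
        (1 - 2 * G * m r / (c ^ 2 * r))⁻¹) < 0 := by
    intro r hr
    have hmr := hm0 r hr
    have hρr := hρp r hr
    have hpr := hp0 r hr
    have hr1 := hr.1
    have h1 : 0 < G * m r * ρ (p r) / r ^ 2 := by positivity
    have h2 : 0 < 1 + p r / (ρ (p r) * c ^ 2) := by positivity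
    have h3 : 0 < 1 + 4 * Real.pi * r ^ 3 * p r / (m r * c ^ 2) := by positivity
    have h4 : 0 < (1 - 2 * G * m r / (c ^ 2 * r))⁻¹ := inv_pos.mpr (hy0 r hr)
    nlinarith [mul_pos (mul_pos (mul_pos h1 h2) h3) h4]
  have hpcont : ContinuousOn p (Ioo (0:ℝ) R₀) :=
    fun r hr => ((hdp r hr).continuousAt).continuousWithinAt
  have hpanti : AntitoneOn p (Ioo (0:ℝ) R₀) := by
    apply antitoneOn_of_deriv_nonpos hconv hpcont
    · intro r hr
      rw [isOpen_Ioo.interior_eq] at hr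
      exact ((hdp r hr).differentiableAt).differentiableWithinAt
    · intro r hr
      rw [isOpen_Ioo.interior_eq] at hr
      rw [(hdp r hr).deriv]
      exact (hP'neg r hr).le
  have hρmono : MonotoneOn ρ (Ioi (0:ℝ)) := by
    apply monotoneOn_of_deriv_nonneg (convex_Ioi 0) (hρ.1.mono Ioi_subset_Ici_self)
    · rw [interior_Ioi]
      exact hρ.2.1.differentiableOn (by norm_num)
    · intro q hq
      rw [interior_Ioi] at hq
      exact hρ.2.2.2.2 q hq
  have hρpanti : ∀ r ∈ Ioo (0:ℝ) R₀, ∀ r' ∈ Ioo (0:ℝ) R₀, r ≤ r' → ρ (p r') ≤ ρ (p r) :=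
    fun r hr r' hr' hrr' => hρmono (hp0 r' hr') (hp0 r hr) (hpanti hr hr' hrr')
  have hmleM : ∀ r ∈ Ioo (0:ℝ) R₀, m r ≤ M := by
    intro r hr
    refine ge_of_tendsto hM ?_
    filter_upwards [Ioo_mem_nhdsLT (show R₀ ∈ Ioc r R₀ from ⟨hr.2, le_rfl⟩).1] with r' hr'
    exact hmmono hr ⟨lt_trans hr.1 hr'.1, hr'.2⟩ hr'.1.le
  have hMle : 2 * G * M ≤ c ^ 2 * R₀ := by
    have h2G : (0:ℝ) < 2 * G := by positivity
    have hMd : M ≤ c ^ 2 * R₀ / (2 * G) := by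
      refine le_of_tendsto hM ?_
      filter_upwards [Ioo_mem_nhdsLT
        (show R₀ ∈ Ioc (R₀/2) R₀ from ⟨by linarith, le_rfl⟩).1] with r' hr'
      have hr'mem : r' ∈ Ioo (0:ℝ) R₀ := ⟨by linarith [hr'.1], hr'.2⟩
      have h1 := hlt r' hr'mem
      have h2 : c ^ 2 * r' ≤ c ^ 2 * R₀ := by nlinarith [hr'.2]
      rw [le_div_iff₀ h2G]
      nlinarith
    nlinarith [(le_div_iff₀ h2G).mp hMd]
  have hytendgen : Tendsto (fun r => 1 - 2 * G * m r / (c ^ 2 * r)) (nhdsWithin R₀ (Iio R₀))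
      (nhds (1 - 2 * G * M / (c ^ 2 * R₀))) := by
    have h1 : Tendsto (fun r : ℝ => c ^ 2 * r) (nhdsWithin R₀ (Iio R₀)) (nhds (c ^ 2 * R₀)) :=
      ((continuous_const.mul continuous_id).tendsto R₀).mono_left nhdsWithin_le_nhds
    have h2 : Tendsto (fun r => 2 * G * m r) (nhdsWithin R₀ (Iio R₀)) (nhds (2 * G * M)) :=
      hM.const_mul (2 * G)
    exact tendsto_const_nhds.sub (h2.div h1 (ne_of_gt (by positivity)))
  have hkey : 2 * G * M < c ^ 2 * R₀ := by
    by_contra hcon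
    push_neg at hcon
    have heq : 2 * G * M = c ^ 2 * R₀ := le_antisymm hMle hcon
    have hv : 1 - 2 * G * M / (c ^ 2 * R₀) = 0 := by
      rw [heq, div_self (ne_of_gt (show (0:ℝ) < c ^ 2 * R₀ by positivity))]
      norm_num
    have hytend : Tendsto (fun r => 1 - 2 * G * m r / (c ^ 2 * r)) (nhdsWithin R₀ (Iio R₀))
        (nhds 0) := by
      rw [← hv]; exact hytendgen
    set r₁ := R₀ / 2 with hr₁def
    have hr₁mem : r₁ ∈ Ioo (0:ℝ) R₀ := ⟨by rw [hr₁def]; linarith, by rw [hr₁def]; linarith⟩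
    have hmr₁ : 0 < m r₁ := hm0 r₁ hr₁mem
    set L₀ := m r₁ / (8 * Real.pi * R₀ ^ 3) with hL₀def
    have hL₀pos : 0 < L₀ := div_pos hmr₁ (by positivity)
    by_cases hinf : ∃ r ∈ Ioo r₁ R₀, ρ (p r) < L₀
    · -- density goes below L₀ : metric derivative eventually ≥ δ > 0, contradiction with y → 0
      obtain ⟨r₂, hr₂, hρ₂⟩ := hinf
      have hr₂mem : r₂ ∈ Ioo (0:ℝ) R₀ := ⟨lt_trans hr₁mem.1 hr₂.1, hr₂.2⟩
      set δ := G * m r₁ / (c ^ 2 * R₀ ^ 2) with hδdef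
      have hδpos : 0 < δ := div_pos (mul_pos hG hmr₁) (by positivity)
      have hY'ge : ∀ r ∈ Ioo r₂ R₀,
          δ ≤ 2 * G * m r / (c ^ 2 * r ^ 2) - 8 * Real.pi * G * r * ρ (p r) / c ^ 2 := by
        intro r hr
        have hrmem : r ∈ Ioo (0:ℝ) R₀ := ⟨lt_trans hr₂mem.1 hr.1, hr.2⟩
        have hmge : m r₁ ≤ m r := hmmono hr₁mem hrmem (le_trans hr₂.1.le hr.1.le)
        have hρle : ρ (p r) ≤ ρ (p r₂) := hρpanti r₂ hr₂mem r hrmem hr.1.le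
        have hρle2 : ρ (p r) ≤ L₀ := le_of_lt (lt_of_le_of_lt hρle hρ₂)
        have hρnn : 0 ≤ ρ (p r) := (hρp r hrmem).le
        have e1' : G * m r₁ / (c ^ 2 * R₀ ^ 2) ≤ G * m r / (c ^ 2 * r ^ 2) := by
          apply div_le_div₀ (mul_nonneg hG.le (hm0 r hrmem).le)
          · nlinarith
          · exact mul_pos hc2 (pow_pos hrmem.1 2)
          · have : r ^ 2 ≤ R₀ ^ 2 := pow_le_pow_left₀ hrmem.1.le hrmem.2.le 2
            nlinarith
        have e1 : 2 * δ ≤ 2 * G * m r / (c ^ 2 * r ^ 2) := by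
          rw [hδdef]
          calc 2 * (G * m r₁ / (c ^ 2 * R₀ ^ 2)) ≤ 2 * (G * m r / (c ^ 2 * r ^ 2)) := by linarith
            _ = 2 * G * m r / (c ^ 2 * r ^ 2) := by ring
        have e2 : 8 * Real.pi * G * r * ρ (p r) / c ^ 2 ≤ δ := by
          rw [hδdef, div_le_div_iff₀ hc2 (by positivity)]

          have h8 : ρ (p r) * (8 * Real.pi * R₀ ^ 3) ≤ m r₁ := by
            rw [hL₀def] at hρle2
            exact (le_div_iff₀ (by positivity)).mp hρle2
          have hrle : r ≤ R₀ := hrmem.2.le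
          nlinarith [mul_le_mul_of_nonneg_left h8 (mul_nonneg hG.le hc2.le),
            mul_nonneg (mul_nonneg (mul_nonneg hπ.le hG.le) hρnn) (mul_nonneg hc2.le (sq_nonneg R₀))]
        linarith
      have hψmono : MonotoneOn (fun r => (1 - 2 * G * m r / (c ^ 2 * r)) - δ * r) (Ioo r₂ R₀) := by
        apply monotoneOn_of_deriv_nonneg (convex_Ioo _ _)
        · intro r hr
          have hrmem : r ∈ Ioo (0:ℝ) R₀ := ⟨lt_trans hr₂mem.1 hr.1, hr.2⟩
          exact (((hdy r hrmem).sub ((hasDerivAt_id' (x := r)).const_mul δ)).continuousAt).continuousWithinAt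
        · intro r hr
          rw [isOpen_Ioo.interior_eq] at hr
          have hrmem : r ∈ Ioo (0:ℝ) R₀ := ⟨lt_trans hr₂mem.1 hr.1, hr.2⟩
          exact (((hdy r hrmem).sub ((hasDerivAt_id' (x := r)).const_mul δ)).differentiableAt).differentiableWithinAt
        · intro r hr
          rw [isOpen_Ioo.interior_eq] at hr
          have hrmem : r ∈ Ioo (0:ℝ) R₀ := ⟨lt_trans hr₂mem.1 hr.1, hr.2⟩
          rw [((hdy r hrmem).fun_sub ((hasDerivAt_id' (x := r)).const_mul δ)).deriv]
          have := hY'ge r hr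
          linarith
      set r₃ := (r₂ + R₀) / 2 with hr₃def
      have hr₃mem2 : r₃ ∈ Ioo r₂ R₀ := ⟨by rw [hr₃def]; linarith [hr₂.2], by rw [hr₃def]; linarith [hr₂.2]⟩
      have hr₃mem : r₃ ∈ Ioo (0:ℝ) R₀ := ⟨lt_trans hr₂mem.1 hr₃mem2.1, hr₃mem2.2⟩
      have hδtend : Tendsto (fun r : ℝ => δ * r) (nhdsWithin R₀ (Iio R₀)) (nhds (δ * R₀)) :=
        ((continuous_const.mul continuous_id).tendsto R₀).mono_left nhdsWithin_le_nhds
      have hle : (1 - 2 * G * m r₃ / (c ^ 2 * r₃)) - δ * r₃ ≤ 0 - δ * R₀ := by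
        refine ge_of_tendsto (hytend.sub hδtend) ?_
        filter_upwards [Ioo_mem_nhdsLT
          (show R₀ ∈ Ioc r₃ R₀ from ⟨hr₃mem2.2, le_rfl⟩).1] with r' hr'
        exact hψmono hr₃mem2 ⟨lt_trans hr₃mem2.1 hr'.1, hr'.2⟩ hr'.1.le
      have hy3 := hy0 r₃ hr₃mem
      have hlt3 : δ * r₃ < δ * R₀ := mul_lt_mul_of_pos_left hr₃mem2.2 hδpos
      linarith
    · -- density bounded below: pressure forced to -∞, contradiction
      push_neg at hinf
      set K := 8 * Real.pi * G * R₀ * ρ (p r₁) / c ^ 2 with hKdef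
      have hρr₁ : 0 < ρ (p r₁) := hρp r₁ hr₁mem
      have hKpos : 0 < K := div_pos (by positivity) hc2
      have hyub : ∀ r ∈ Ioo r₁ R₀, 1 - 2 * G * m r / (c ^ 2 * r) ≤ K * (R₀ - r) := by
        have hθmono : MonotoneOn (fun r => (1 - 2 * G * m r / (c ^ 2 * r)) + K * r) (Ioo r₁ R₀) := by
          apply monotoneOn_of_deriv_nonneg (convex_Ioo _ _)
          · intro r hr
            have hrmem : r ∈ Ioo (0:ℝ) R₀ := ⟨lt_trans hr₁mem.1 hr.1, hr.2⟩
            exact (((hdy r hrmem).add ((hasDerivAt_id' (x := r)).const_mul K)).continuousAt).continuousWithinAt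
          · intro r hr
            rw [isOpen_Ioo.interior_eq] at hr
            have hrmem : r ∈ Ioo (0:ℝ) R₀ := ⟨lt_trans hr₁mem.1 hr.1, hr.2⟩
            exact (((hdy r hrmem).add ((hasDerivAt_id' (x := r)).const_mul K)).differentiableAt).differentiableWithinAt
          · intro r hr
            rw [isOpen_Ioo.interior_eq] at hr
            have hrmem : r ∈ Ioo (0:ℝ) R₀ := ⟨lt_trans hr₁mem.1 hr.1, hr.2⟩
            rw [((hdy r hrmem).fun_add ((hasDerivAt_id' (x := r)).const_mul K)).deriv]
            have hρle : ρ (p r) ≤ ρ (p r₁) := hρpanti r₁ hr₁mem r hrmem hr.1.le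
            have hρnn : 0 ≤ ρ (p r) := (hρp r hrmem).le
            have h1 : 8 * Real.pi * G * r * ρ (p r) / c ^ 2 ≤ K := by
              rw [hKdef]
              apply div_le_div₀ (mul_nonneg (by positivity) hρr₁.le) ?_ hc2 le_rfl
              have h2 : 8 * Real.pi * G * r ≤ 8 * Real.pi * G * R₀ := by
                nlinarith [mul_nonneg (mul_nonneg (mul_nonneg (by norm_num : (0:ℝ) ≤ 8) hπ.le)
                  hG.le) (by linarith [hrmem.2.le] : (0:ℝ) ≤ R₀ - r)]
              exact mul_le_mul h2 hρle hρnn (by positivity)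
            have h2 : 0 ≤ 2 * G * m r / (c ^ 2 * r ^ 2) :=
              le_of_lt (div_pos (mul_pos (by positivity) (hm0 r hrmem))
                (mul_pos hc2 (pow_pos hrmem.1 2)))
            linarith
        intro r hr
        have hKtend : Tendsto (fun r : ℝ => K * r) (nhdsWithin R₀ (Iio R₀)) (nhds (K * R₀)) :=
          ((continuous_const.mul continuous_id).tendsto R₀).mono_left nhdsWithin_le_nhds
        have hle : (1 - 2 * G * m r / (c ^ 2 * r)) + K * r ≤ 0 + K * R₀ := by
          refine ge_of_tendsto (hytend.add hKtend) ?_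
          filter_upwards [Ioo_mem_nhdsLT
            (show R₀ ∈ Ioc r R₀ from ⟨hr.2, le_rfl⟩).1] with r' hr'
          exact hθmono hr ⟨lt_trans hr.1 hr'.1, hr'.2⟩ hr'.1.le
        linarith
      set C := G * m r₁ * L₀ / R₀ ^ 2 with hCdef
      have hCpos : 0 < C := div_pos (mul_pos (mul_pos hG hmr₁) hL₀pos) (by positivity)
      have hP'le : ∀ r ∈ Ioo r₁ R₀,
          (-(G * m r * ρ (p r) / r ^ 2) * (1 + p r / (ρ (p r) * c ^ 2)) *
            (1 + 4 * Real.pi * r ^ 3 * p r / (m r * c ^ 2)) *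
            (1 - 2 * G * m r / (c ^ 2 * r))⁻¹) ≤ -(C / (K * (R₀ - r))) := by
        intro r hr
        have hrmem : r ∈ Ioo (0:ℝ) R₀ := ⟨lt_trans hr₁mem.1 hr.1, hr.2⟩
        have hmr := hm0 r hrmem
        have hρr := hρp r hrmem
        have hpr := hp0 r hrmem
        have hyv := hy0 r hrmem
        have hmge : m r₁ ≤ m r := hmmono hr₁mem hrmem hr.1.le
        have hAC : C ≤ G * m r * ρ (p r) / r ^ 2 := by
          rw [hCdef]
          apply div_le_div₀ (mul_nonneg (mul_nonneg hG.le hmr.le) hρr.le)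
          · have h1 : G * m r₁ ≤ G * m r := by nlinarith
            exact mul_le_mul h1 (hinf r hr) hL₀pos.le (mul_nonneg hG.le hmr.le)
          · exact pow_pos hrmem.1 2
          · nlinarith [pow_le_pow_left₀ hrmem.1.le hrmem.2.le 2]
        have hinv : (K * (R₀ - r))⁻¹ ≤ (1 - 2 * G * m r / (c ^ 2 * r))⁻¹ :=
          inv_anti₀ hyv (hyub r hr)
        have hA0 : (0:ℝ) ≤ G * m r * ρ (p r) / r ^ 2 := by positivity
        have hyinv0 : (0:ℝ) ≤ (1 - 2 * G * m r / (c ^ 2 * r))⁻¹ := (inv_pos.mpr hyv).le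
        have hB1 : (1:ℝ) ≤ 1 + p r / (ρ (p r) * c ^ 2) := by
          have : 0 ≤ p r / (ρ (p r) * c ^ 2) := by positivity
          linarith
        have hC1 : (1:ℝ) ≤ 1 + 4 * Real.pi * r ^ 3 * p r / (m r * c ^ 2) := by
          have h0 : (0:ℝ) < r := hrmem.1
          have : 0 ≤ 4 * Real.pi * r ^ 3 * p r / (m r * c ^ 2) := by positivity
          linarith
        have s1 : C * (K * (R₀ - r))⁻¹ ≤ (G * m r * ρ (p r) / r ^ 2) *
            (1 - 2 * G * m r / (c ^ 2 * r))⁻¹ :=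
          mul_le_mul hAC hinv
            (inv_nonneg.mpr (mul_nonneg hKpos.le (by linarith [hr.2] : (0:ℝ) ≤ R₀ - r))) hA0
        have hprod : 0 ≤ ((G * m r * ρ (p r) / r ^ 2) * (1 - 2 * G * m r / (c ^ 2 * r))⁻¹) *
            ((1 + p r / (ρ (p r) * c ^ 2)) * (1 + 4 * Real.pi * r ^ 3 * p r / (m r * c ^ 2)) - 1) :=
          mul_nonneg (mul_nonneg hA0 hyinv0)
            (by nlinarith [mul_le_mul hB1 hC1 zero_le_one (le_trans zero_le_one hB1)])
        exact tov_aux hA0 hyinv0 hB1 hC1 (by rw [div_eq_mul_inv]; exact s1)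
      set r₄ := (r₁ + R₀) / 2 with hr₄def
      have hr₄mem1 : r₄ ∈ Ioo r₁ R₀ := ⟨by rw [hr₄def]; linarith [hr₁mem.2], by rw [hr₄def]; linarith [hr₁mem.2]⟩
      have hr₄mem : r₄ ∈ Ioo (0:ℝ) R₀ := ⟨lt_trans hr₁mem.1 hr₄mem1.1, hr₄mem1.2⟩
      have hpr₄ : 0 < p r₄ := hp0 r₄ hr₄mem
      have hφanti : AntitoneOn (fun r => p r - (C / K) * Real.log (R₀ - r)) (Ioo r₁ R₀) := by
        apply antitoneOn_of_deriv_nonpos (convex_Ioo _ _)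
        · intro r hr
          have hrmem : r ∈ Ioo (0:ℝ) R₀ := ⟨lt_trans hr₁mem.1 hr.1, hr.2⟩
          have hlog : HasDerivAt (fun s => Real.log (R₀ - s)) (-1 / (R₀ - r)) r :=
            ((hasDerivAt_id' (x := r)).const_sub R₀).log (sub_ne_zero.mpr (ne_of_gt hr.2))
          exact (((hdp r hrmem).sub (hlog.const_mul (C / K))).continuousAt).continuousWithinAt
        · intro r hr
          rw [isOpen_Ioo.interior_eq] at hr
          have hrmem : r ∈ Ioo (0:ℝ) R₀ := ⟨lt_trans hr₁mem.1 hr.1, hr.2⟩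
          have hlog : HasDerivAt (fun s => Real.log (R₀ - s)) (-1 / (R₀ - r)) r :=
            ((hasDerivAt_id' (x := r)).const_sub R₀).log (sub_ne_zero.mpr (ne_of_gt hr.2))
          exact (((hdp r hrmem).sub (hlog.const_mul (C / K))).differentiableAt).differentiableWithinAt
        · intro r hr
          rw [isOpen_Ioo.interior_eq] at hr
          have hrmem : r ∈ Ioo (0:ℝ) R₀ := ⟨lt_trans hr₁mem.1 hr.1, hr.2⟩
          have hlog : HasDerivAt (fun s => Real.log (R₀ - s)) (-1 / (R₀ - r)) r :=
            ((hasDerivAt_id' (x := r)).const_sub R₀).log (sub_ne_zero.mpr (ne_of_gt hr.2))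
          rw [((hdp r hrmem).fun_sub (hlog.const_mul (C / K))).deriv]
          have h1 := hP'le r hr
          have hrw : C / K * (-1 / (R₀ - r)) = -(C / (K * (R₀ - r))) := by
            field_simp
          linarith [hrw]
      set t := (R₀ - r₄) * Real.exp (-(p r₄ * K / C) - 1) with htdef
      have htpos : 0 < t := mul_pos (by linarith [hr₄mem1.2]) (Real.exp_pos _)
      have htlt : t < R₀ - r₄ := by
        have h1 : Real.exp (-(p r₄ * K / C) - 1) < 1 := by
          rw [Real.exp_lt_one_iff]
          have : 0 < p r₄ * K / C := div_pos (mul_pos hpr₄ hKpos) hCpos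
          linarith
        nlinarith [hr₄mem1.2]
      set r₅ := R₀ - t with hr₅def
      have hr₅mem1 : r₅ ∈ Ioo r₁ R₀ := ⟨by rw [hr₅def]; linarith [htlt, hr₄mem1.1], by rw [hr₅def]; linarith [htpos]⟩
      have hr₅mem : r₅ ∈ Ioo (0:ℝ) R₀ := ⟨lt_trans hr₁mem.1 hr₅mem1.1, hr₅mem1.2⟩
      have hpr₅ : 0 < p r₅ := hp0 r₅ hr₅mem
      have hle := hφanti hr₄mem1 hr₅mem1 (by rw [hr₅def]; linarith [htlt] : r₄ ≤ r₅)
      have hlogeq : Real.log (R₀ - r₅) = Real.log (R₀ - r₄) + (-(p r₄ * K / C) - 1) := by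
        have h1 : R₀ - r₅ = t := by rw [hr₅def]; ring
        rw [h1, htdef,
          Real.log_mul (ne_of_gt (show (0:ℝ) < R₀ - r₄ by linarith [hr₄mem1.2]))
            (Real.exp_ne_zero _), Real.log_exp]
      have hle' : p r₅ - C / K * Real.log (R₀ - r₅) ≤ p r₄ - C / K * Real.log (R₀ - r₄) := hle
      rw [hlogeq] at hle'
      have hCK : 0 < C / K := div_pos hCpos hKpos
      have hKne : K ≠ 0 := ne_of_gt hKpos
      have hCne : C ≠ 0 := ne_of_gt hCpos
      have hsimp : C / K * (Real.log (R₀ - r₄) + (-(p r₄ * K / C) - 1)) =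
          C / K * Real.log (R₀ - r₄) - p r₄ - C / K := by
        field_simp
        ring
      nlinarith [hle', hsimp, hpr₅, hCK]
  have hpart1 : G * M / (c ^ 2 * R₀) < 1 / 2 := by
    rw [div_lt_div_iff₀ (by positivity) (by norm_num : (0:ℝ) < 2)]
    linarith
  refine ⟨hpart1, ?_⟩
  have hyR : 0 < 1 - 2 * G * M / (c ^ 2 * R₀) := by
    have h := (div_lt_one (show (0:ℝ) < c ^ 2 * R₀ by positivity)).mpr hkey
    linarith
  -- bound near R₀
  have hnearR : ∃ b ∈ Ioo (0:ℝ) R₀, ∀ r ∈ Ioo b R₀,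
      (1 - 2 * G * M / (c ^ 2 * R₀)) / 2 ≤ 1 - 2 * G * m r / (c ^ 2 * r) := by
    have hev : ∀ᶠ r in nhdsWithin R₀ (Iio R₀),
        (1 - 2 * G * M / (c ^ 2 * R₀)) / 2 < 1 - 2 * G * m r / (c ^ 2 * r) :=
      hytendgen.eventually (eventually_gt_nhds (by linarith))
    obtain ⟨l, hl, hsub⟩ := mem_nhdsLT_iff_exists_Ioo_subset.mp hev
    refine ⟨max l (R₀ / 2), ⟨lt_of_lt_of_le (by linarith) (le_max_right _ _),
      max_lt hl (by linarith)⟩, ?_⟩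
    intro r hr
    exact le_of_lt (hsub ⟨lt_of_le_of_lt (le_max_left _ _) hr.1, hr.2⟩)
  -- bound near 0
  have hytend0 : Tendsto (fun r => 1 - 2 * G * m r / (c ^ 2 * r)) (nhdsWithin 0 (Ioi 0))
      (nhds 1) := by
    have h1 : Tendsto (fun r : ℝ => 2 * G / c ^ 2 * (m r / r ^ 3) * r ^ 2)
        (nhdsWithin 0 (Ioi 0)) (nhds (2 * G / c ^ 2 * (4 * Real.pi / 3 * ρ pc) * 0 ^ 2)) :=
      (hmlim.const_mul (2 * G / c ^ 2)).mul
        (((continuous_pow 2).tendsto 0).mono_left nhdsWithin_le_nhds)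
    have h2 : Tendsto (fun r => 2 * G * m r / (c ^ 2 * r)) (nhdsWithin (0:ℝ) (Ioi 0))
        (nhds 0) := by
      have heq : (fun r : ℝ => 2 * G / c ^ 2 * (m r / r ^ 3) * r ^ 2) =ᶠ[nhdsWithin (0:ℝ) (Ioi 0)]
          (fun r => 2 * G * m r / (c ^ 2 * r)) := by
        filter_upwards [self_mem_nhdsWithin] with r hr
        have hrne : r ≠ 0 := ne_of_gt hr
        field_simp
      have := h1.congr' heq
      simpa using this
    have := (tendsto_const_nhds (x := (1:ℝ))).sub h2
    simpa using this
  have hnear0 : ∃ a ∈ Ioo (0:ℝ) R₀, ∀ r ∈ Ioo (0:ℝ) a,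
      (1:ℝ) / 2 ≤ 1 - 2 * G * m r / (c ^ 2 * r) := by
    have hev : ∀ᶠ r in nhdsWithin (0:ℝ) (Ioi 0),
        (1:ℝ) / 2 < 1 - 2 * G * m r / (c ^ 2 * r) :=
      hytend0.eventually (eventually_gt_nhds (by norm_num))
    obtain ⟨u, hu, hsub⟩ := mem_nhdsGT_iff_exists_Ioo_subset.mp hev
    have hu0 : (0:ℝ) < u := hu
    refine ⟨min u R₀ / 2, ⟨half_pos (lt_min hu0 hR0), ?_⟩, ?_⟩
    · have := min_le_right u R₀
      linarith
    · intro r hr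
      refine le_of_lt (hsub ⟨hr.1, ?_⟩)
      have := min_le_left u R₀
      linarith [hr.2]
  obtain ⟨a, hamem, ha⟩ := hnear0
  obtain ⟨b, hbmem, hb⟩ := hnearR
  have hsub' : Icc (min a b) (max a b) ⊆ Ioo (0:ℝ) R₀ := fun r hr =>
    ⟨lt_of_lt_of_le (lt_min hamem.1 hbmem.1) hr.1, lt_of_le_of_lt hr.2 (max_lt hamem.2 hbmem.2)⟩
  have hcompact : IsCompact (Icc (min a b) (max a b)) := isCompact_Icc
  have hne : (Icc (min a b) (max a b)).Nonempty := nonempty_Icc.mpr min_le_max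
  have hcont : ContinuousOn (fun r => 1 - 2 * G * m r / (c ^ 2 * r))
      (Icc (min a b) (max a b)) := by
    intro r hr
    have hrmem := hsub' hr
    have h1 : ContinuousAt m r := (hdm r hrmem).continuousAt
    have h2 : ContinuousAt (fun r => 1 - 2 * G * m r / (c ^ 2 * r)) r := by
      apply ContinuousAt.sub continuousAt_const
      exact (h1.const_mul (2 * G)).div (continuousAt_id.const_mul (c ^ 2))
        (ne_of_gt (mul_pos hc2 hrmem.1))
    exact h2.continuousWithinAt
  obtain ⟨x₀, hx₀mem, hx₀min⟩ := hcompact.exists_isMinOn hne hcont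
  have hx₀ : ∀ r ∈ Icc (min a b) (max a b), 1 - 2 * G * m x₀ / (c ^ 2 * x₀) ≤
      1 - 2 * G * m r / (c ^ 2 * r) := isMinOn_iff.mp hx₀min
  refine ⟨min (min ((1 - 2 * G * M / (c ^ 2 * R₀)) / 2) (1 / 2))
    (1 - 2 * G * m x₀ / (c ^ 2 * x₀)), ?_, ?_⟩
  · exact lt_min (lt_min (by linarith) (by norm_num)) (hy0 x₀ (hsub' hx₀mem))
  · intro r hrdom
    have hr := (hmem r).mp hrdom
    rcases lt_or_ge r a with hra | hra
    · have h := ha r ⟨hr.1, hra⟩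
      have h1 : min (min ((1 - 2 * G * M / (c ^ 2 * R₀)) / 2) (1 / 2))
          (1 - 2 * G * m x₀ / (c ^ 2 * x₀)) ≤ 1 / 2 :=
        le_trans (min_le_left _ _) (min_le_right _ _)
      linarith
    · rcases le_or_gt r b with hrb | hrb
      · have hrI : r ∈ Icc (min a b) (max a b) :=
          ⟨le_trans (min_le_left a b) hra, le_trans hrb (le_max_right a b)⟩
        have h := hx₀ r hrI
        have h1 : min (min ((1 - 2 * G * M / (c ^ 2 * R₀)) / 2) (1 / 2))
            (1 - 2 * G * m x₀ / (c ^ 2 * x₀)) ≤ 1 - 2 * G * m x₀ / (c ^ 2 * x₀) :=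
          min_le_right _ _
        linarith
      · have h := hb r ⟨hrb, hr.2⟩
        have h1 : min (min ((1 - 2 * G * M / (c ^ 2 * R₀)) / 2) (1 / 2))
            (1 - 2 * G * m x₀ / (c ^ 2 * x₀)) ≤ (1 - 2 * G * M / (c ^ 2 * R₀)) / 2 :=
          le_trans (min_le_left _ _) (min_le_left _ _)
        linarith
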